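/- Let ρ > 0, κ > 0, c₁ > 0 and let f : (0,∞) → [0,∞) be locally integrable and satisfy f(t) ≤ c₁ + κ ∫₀ᵗ (t-s)^{ρ-1} f(s) ds for all t > 0. Then there exist positive constants c₂ and c₃ (depending only on ρ and c₁) such that f(t) ≤ c₂ exp(c₃ (Γ(ρ)κ)^{1/ρ} t) for all t > 0. -/

import Mathlib

open MeasureTheory Real
open scoped ENNReal

namespace FracGronwall

open Set

lemma ofReal_integral_le {α : Type*} [MeasurableSpace α] (μ : Measure α) (f : α → ℝ) :
    ENNReal.ofReal (∫ a, f a ∂μ) ≤ ∫⁻ a, ENNReal.ofReal (f a) ∂μ := by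
  by_cases hf : Integrable f μ
  · have h1 : ∫ a, f a ∂μ ≤ ∫ a, max (f a) 0 ∂μ :=
      integral_mono hf hf.pos_part fun a => le_max_left _ _
    calc ENNReal.ofReal (∫ a, f a ∂μ) ≤ ENNReal.ofReal (∫ a, max (f a) 0 ∂μ) :=
          ENNReal.ofReal_le_ofReal h1
      _ = ∫⁻ a, ENNReal.ofReal (max (f a) 0) ∂μ :=
          ofReal_integral_eq_lintegral_ofReal hf.pos_part
            (Filter.Eventually.of_forall fun a => le_max_right _ _)
      _ = ∫⁻ a, ENNReal.ofReal (f a) ∂μ := by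
          refine lintegral_congr fun a => ?_
          rcases le_total (f a) 0 with h | h
          · rw [max_eq_right h, ENNReal.ofReal_zero, ENNReal.ofReal_eq_zero.2 h]
          · rw [max_eq_left h]
  · rw [integral_undef hf, ENNReal.ofReal_zero]
    exact zero_le

lemma ker_intervalIntegrable {r : ℝ} (hr : -1 < r) (a b : ℝ) :
    IntervalIntegrable (fun s => (b - s) ^ r) volume a b := by
  have h := (intervalIntegral.intervalIntegrable_rpow' hr (a := b - a) (b := 0)).comp_sub_left b
  simpa using h

lemma ker_integrableOn {r : ℝ} (hr : -1 < r) {a b : ℝ} (hab : a ≤ b) :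
    IntegrableOn (fun s => (b - s) ^ r) (Ioo a b) := by
  have := (intervalIntegrable_iff_integrableOn_Ioo_of_le hab).mp (ker_intervalIntegrable hr a b)
  exact this

lemma ker_integral {r : ℝ} (hr : -1 < r) {a b : ℝ} (hab : a ≤ b) :
    ∫ s in Ioo a b, (b - s) ^ r = (b - a) ^ (r + 1) / (r + 1) := by
  rw [← integral_Ioc_eq_integral_Ioo, ← intervalIntegral.integral_of_le hab]
  rw [intervalIntegral.integral_comp_sub_left (fun u => u ^ r) b]
  simp only [sub_self]
  rw [integral_rpow (Or.inl hr)]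
  rw [zero_rpow (by linarith : r + 1 ≠ 0)]
  ring

lemma ker_integrableOn' {r : ℝ} (hr : -1 < r) {a b : ℝ} (hab : a ≤ b) :
    IntegrableOn (fun t => (t - a) ^ r) (Ioo a b) := by
  have h := (intervalIntegral.intervalIntegrable_rpow' hr (a := 0) (b := b - a)).comp_sub_right a
  rw [zero_add, show b - a + a = b by ring] at h
  exact (intervalIntegrable_iff_integrableOn_Ioo_of_le hab).mp h

lemma ker_integral' {r : ℝ} (hr : -1 < r) {a b : ℝ} (hab : a ≤ b) :
    ∫ t in Ioo a b, (t - a) ^ r = (b - a) ^ (r + 1) / (r + 1) := by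
  rw [← integral_Ioc_eq_integral_Ioo, ← intervalIntegral.integral_of_le hab]
  rw [intervalIntegral.integral_comp_sub_right (fun u => u ^ r) a]
  simp only [sub_self]
  rw [integral_rpow (Or.inl hr), zero_rpow (by linarith : r + 1 ≠ 0)]
  ring

lemma exp_ker_integrableOn {ρ m : ℝ} (hρ : 0 < ρ) (hm : 0 < m) :
    IntegrableOn (fun u : ℝ => u ^ (ρ - 1) * Real.exp (-(m * u))) (Ioi 0) := by
  have h := integrableOn_rpow_mul_exp_neg_mul_rpow (p := 1) (s := ρ - 1) (b := m)
    (by linarith) one_pos hm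
  refine h.congr_fun (fun x hx => ?_) measurableSet_Ioi
  dsimp only
  rw [rpow_one]
  ring_nf

lemma exp_ker_bound {ρ m t : ℝ} (hρ : 0 < ρ) (hm : 0 < m) (ht : 0 < t) :
    ∫ s in Ioo 0 t, (t - s) ^ (ρ - 1) * Real.exp (m * s)
      ≤ Real.exp (m * t) * ((1 / m) ^ ρ * Real.Gamma ρ) := by
  have key : ∀ s : ℝ, (t - s) ^ (ρ - 1) * Real.exp (m * s)
      = Real.exp (m * t) * ((t - s) ^ (ρ - 1) * Real.exp (-(m * (t - s)))) := by
    intro s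
    rw [mul_comm ((t - s) ^ (ρ - 1)) (Real.exp (-(m * (t - s)))), ← mul_assoc, ← Real.exp_add,
      show m * t + -(m * (t - s)) = m * s by ring, mul_comm]
  calc ∫ s in Ioo 0 t, (t - s) ^ (ρ - 1) * Real.exp (m * s)
      = Real.exp (m * t) * ∫ s in Ioo 0 t, (t - s) ^ (ρ - 1) * Real.exp (-(m * (t - s))) := by
        rw [← integral_const_mul]
        exact integral_congr_ae (Filter.Eventually.of_forall fun s => key s)
    _ = Real.exp (m * t) * ∫ u in Ioo 0 t, u ^ (ρ - 1) * Real.exp (-(m * u)) := by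
        congr 1
        rw [← integral_Ioc_eq_integral_Ioo, ← intervalIntegral.integral_of_le ht.le,
          intervalIntegral.integral_comp_sub_left (fun u => u ^ (ρ - 1) * Real.exp (-(m * u))) t]
        simp only [sub_self, sub_zero]
        rw [intervalIntegral.integral_of_le ht.le, integral_Ioc_eq_integral_Ioo]
    _ ≤ Real.exp (m * t) * ∫ u in Ioi 0, u ^ (ρ - 1) * Real.exp (-(m * u)) := by
        refine mul_le_mul_of_nonneg_left ?_ (Real.exp_pos _).le
        refine setIntegral_mono_set (exp_ker_integrableOn hρ hm) ?_ ?_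
        · filter_upwards [self_mem_ae_restrict measurableSet_Ioi] with u hu
          exact mul_nonneg (rpow_nonneg (le_of_lt hu) _) (Real.exp_pos _).le
        · exact Filter.Eventually.of_forall fun u hu => hu.1
    _ = Real.exp (m * t) * ((1 / m) ^ ρ * Real.Gamma ρ) := by
        rw [Real.integral_rpow_mul_exp_neg_mul_Ioi hρ hm]

end FracGronwall

open Set

/-- Fractional Gronwall inequality: if `ρ > 0`, `c₁ > 0`, then there are constants
`c₂, c₃ > 0` (depending only on `ρ` and `c₁`) such that for every `κ > 0` and every
nonnegative locally integrable `f` on `(0,∞)` satisfying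
`f t ≤ c₁ + κ ∫₀ᵗ (t-s)^{ρ-1} f s ds` for all `t > 0`, we have
`f t ≤ c₂ exp(c₃ (Γ(ρ) κ)^{1/ρ} t)` for all `t > 0`. -/
theorem fractional_gronwall (ρ c₁ : ℝ) (hρ : 0 < ρ) (hc₁ : 0 < c₁) :
    ∃ c₂ > (0 : ℝ), ∃ c₃ > (0 : ℝ), ∀ κ > (0 : ℝ), ∀ f : ℝ → ℝ,
      (∀ t > (0 : ℝ), 0 ≤ f t) →
      LocallyIntegrableOn f (Set.Ioi 0) →
      (∀ t > (0 : ℝ), f t ≤ c₁ + κ * ∫ s in Set.Ioo 0 t, (t - s) ^ (ρ - 1) * f s) →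
      ∀ t > (0 : ℝ), f t ≤ c₂ * Real.exp (c₃ * (Real.Gamma ρ * κ) ^ (1 / ρ) * t) := by
  have hΓ : 0 < Real.Gamma ρ := Real.Gamma_pos_of_pos hρ
  refine ⟨2 * c₁, by positivity, 2 ^ (1/ρ), by positivity, ?_⟩
  intro κ hκ f hf0 hloc hineq T hT
  by_contra hcon0
  push_neg at hcon0
  set μ := (2 * Real.Gamma ρ * κ) ^ (1/ρ) with hμdef
  have hμ : 0 < μ := rpow_pos_of_pos (by positivity) _
  have hμρ : μ ^ ρ = 2 * Real.Gamma ρ * κ := by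
    rw [hμdef, one_div, Real.rpow_inv_rpow (by positivity) hρ.ne']
  have hexp_eq : (2:ℝ) ^ (1/ρ) * (Real.Gamma ρ * κ) ^ (1/ρ) = μ := by
    rw [hμdef, ← Real.mul_rpow (by norm_num) (by positivity), mul_assoc]
  rw [hexp_eq] at hcon0
  set g : ℝ → ℝ := fun s => 2 * c₁ * Real.exp (μ * s) with hgdef
  have hcon : g T < f T := hcon0
  have hgpos : ∀ s, 0 < g s := fun s => by positivity
  have hgmono : Monotone g := by
    intro x y hxy
    simp only [hgdef]
    have h1 := Real.exp_le_exp.2 (mul_le_mul_of_nonneg_left hxy hμ.le)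
    nlinarith [Real.exp_pos (μ * x)]
  have hg2 : ∀ s, 0 ≤ s → 2 * c₁ ≤ g s := by
    intro s hs
    have h1 : (1:ℝ) ≤ Real.exp (μ * s) := Real.one_le_exp (by positivity)
    simp only [hgdef]
    nlinarith
  have hgcont : Continuous g := by
    simp only [hgdef]
    exact continuous_const.mul (Real.continuous_exp.comp (continuous_const.mul continuous_id))
  have hfm : AEStronglyMeasurable f (volume.restrict (Ioi 0)) := hloc.aestronglyMeasurable
  -- Fact A
  have factA : ∀ u, 0 < u → κ * ∫ s in Ioo 0 u, (u - s) ^ (ρ - 1) * g s ≤ g u / 2 := by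
    intro u hu
    have h1 : ∫ s in Ioo 0 u, (u - s) ^ (ρ - 1) * g s
        = 2 * c₁ * ∫ s in Ioo 0 u, (u - s) ^ (ρ - 1) * Real.exp (μ * s) := by
      rw [← integral_const_mul]
      refine integral_congr_ae (Filter.Eventually.of_forall fun s => ?_)
      simp only [hgdef]; ring
    have h2 := FracGronwall.exp_ker_bound hρ hμ hu
    have h3 : (1/μ) ^ ρ = 1 / (2 * Real.Gamma ρ * κ) := by
      rw [one_div, Real.inv_rpow hμ.le, hμρ, one_div]
    have hnn : 0 ≤ ∫ s in Ioo 0 u, (u - s) ^ (ρ - 1) * Real.exp (μ * s) := by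
      refine setIntegral_nonneg measurableSet_Ioo fun s hs => ?_
      exact mul_nonneg (rpow_nonneg (by linarith [hs.2]) _) (Real.exp_pos _).le
    rw [h1]
    have h4 : κ * (2 * c₁ * ∫ s in Ioo 0 u, (u - s) ^ (ρ - 1) * Real.exp (μ * s))
        ≤ κ * (2 * c₁ * (Real.exp (μ * u) * ((1/μ) ^ ρ * Real.Gamma ρ))) := by
      have := mul_le_mul_of_nonneg_left h2 (by positivity : (0:ℝ) ≤ 2 * c₁)
      exact mul_le_mul_of_nonneg_left this hκ.le
    refine h4.trans ?_
    rw [h3]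
    simp only [hgdef]
    have heq : κ * (2 * c₁ * (Real.exp (μ * u) * (1 / (2 * Real.Gamma ρ * κ) * Real.Gamma ρ)))
        = 2 * c₁ * Real.exp (μ * u) / 2 := by
      field_simp
    rw [heq]
  -- the excess function
  set h : ℝ → ℝ := fun s => if s ∈ Ioc 0 T then max (f s - g s) 0 else 0 with hhdef
  have hh0 : ∀ s, 0 ≤ h s := by
    intro s
    simp only [hhdef]
    split <;> simp [le_max_right]
  have hhle : ∀ s ∈ Ioc 0 T, h s ≤ f s := by
    intro s hs
    simp only [hhdef, if_pos hs]
    exact max_le (by linarith [hgpos s]) (hf0 s hs.1)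
  have hhT : 0 < h T := by
    have heq : h T = max (f T - g T) 0 := by
      simp only [hhdef, if_pos (Set.mem_Ioc.mpr ⟨hT, le_rfl⟩ : T ∈ Ioc 0 T)]
    rw [heq]
    exact lt_of_lt_of_le (by linarith : (0:ℝ) < f T - g T) (le_max_left _ _)
  have hker : ∀ u : ℝ, 0 < u → IntegrableOn (fun s => (u - s) ^ (ρ - 1)) (Ioo 0 u) :=
    fun u hu => FracGronwall.ker_integrableOn (by linarith) hu.le
  have hkerm : ∀ u : ℝ, AEStronglyMeasurable (fun s : ℝ => (u - s) ^ (ρ - 1))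
      (volume.restrict (Ioo 0 u)) := by
    intro u
    exact ((measurable_const.sub measurable_id).pow measurable_const).aestronglyMeasurable
  have hfam : ∀ u : ℝ, AEStronglyMeasurable f (volume.restrict (Ioo 0 u)) := by
    intro u
    exact hfm.mono_measure (Measure.restrict_mono (fun s hs => hs.1) le_rfl)
  have hKf : ∀ u, 0 < u → g u < f u →
      IntegrableOn (fun s => (u - s) ^ (ρ - 1) * f s) (Ioo 0 u) := by
    intro u hu hfg
    by_contra hcon2
    have h0 : ∫ s in Ioo 0 u, (u - s) ^ (ρ - 1) * f s = 0 := integral_undef hcon2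
    have h4 := hineq u hu
    rw [h0, mul_zero, add_zero] at h4
    have h5 := hg2 u hu.le
    linarith
  -- Fact B
  have factB : ∀ u ∈ Ioc 0 T, h u ≤ κ * ∫ s in Ioo 0 u, (u - s) ^ (ρ - 1) * h s := by
    intro u hu
    obtain ⟨hu0, huT⟩ := hu
    have hnn : 0 ≤ ∫ s in Ioo 0 u, (u - s) ^ (ρ - 1) * h s := by
      refine setIntegral_nonneg measurableSet_Ioo fun s hs => ?_
      exact mul_nonneg (rpow_nonneg (by linarith [hs.2]) _) (hh0 s)
    by_cases hfg : f u ≤ g u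
    · have hz : h u = 0 := by
        have heq : h u = max (f u - g u) 0 := by
          simp only [hhdef, if_pos (Set.mem_Ioc.mpr ⟨hu0, huT⟩ : u ∈ Ioc 0 T)]
        rw [heq]
        exact max_eq_right (by linarith : f u - g u ≤ 0)
      rw [hz]
      exact mul_nonneg hκ.le hnn
    · push_neg at hfg
      have hKfu := hKf u hu0 hfg
      have hkeru := hker u hu0
      have hfamu := hfam u
      have hgam : AEStronglyMeasurable g (volume.restrict (Ioo 0 u)) :=
        hgcont.aestronglyMeasurable
      have hminam : AEStronglyMeasurable (fun s => min (f s) (g s))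
          (volume.restrict (Ioo 0 u)) :=
        (hfamu.aemeasurable.min hgam.aemeasurable).aestronglyMeasurable
      have hbound : ∀ φ : ℝ → ℝ, (∀ s ∈ Ioo 0 u, 0 ≤ φ s ∧ φ s ≤ g u) →
          AEStronglyMeasurable φ (volume.restrict (Ioo 0 u)) →
          IntegrableOn (fun s => (u - s) ^ (ρ - 1) * φ s) (Ioo 0 u) := by
        intro φ hφ hφm
        refine Integrable.mono' (hkeru.mul_const (g u)) ((hkerm u).mul hφm) ?_
        filter_upwards [self_mem_ae_restrict measurableSet_Ioo] with s hs
        have h1 := hφ s hs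
        have h2 : (0:ℝ) ≤ (u - s) ^ (ρ - 1) := rpow_nonneg (by linarith [hs.2]) _
        rw [Real.norm_eq_abs, abs_of_nonneg (mul_nonneg h2 h1.1)]
        exact mul_le_mul_of_nonneg_left h1.2 h2
      have hKg : IntegrableOn (fun s => (u - s) ^ (ρ - 1) * g s) (Ioo 0 u) :=
        hbound g (fun s hs => ⟨(hgpos s).le, hgmono hs.2.le⟩) hgam
      have hKmin : IntegrableOn (fun s => (u - s) ^ (ρ - 1) * min (f s) (g s)) (Ioo 0 u) :=
        hbound _ (fun s hs => ⟨le_min (hf0 s hs.1) (hgpos s).le,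
          (min_le_right _ _).trans (hgmono hs.2.le)⟩) hminam
      have hptw : ∀ s ∈ Ioo 0 u, (u - s) ^ (ρ - 1) * f s
          = (u - s) ^ (ρ - 1) * min (f s) (g s) + (u - s) ^ (ρ - 1) * h s := by
        intro s hs
        have hsIoc : s ∈ Ioc 0 T := ⟨hs.1, le_trans hs.2.le huT⟩
        have heq : h s = max (f s - g s) 0 := by
          simp only [hhdef, if_pos hsIoc]
        rw [heq]
        rcases le_total (f s) (g s) with hc | hc
        · rw [min_eq_left hc, max_eq_right (by linarith : f s - g s ≤ 0)]
          ring
        · rw [min_eq_right hc, max_eq_left (by linarith : 0 ≤ f s - g s)]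
          ring
      have hKh : IntegrableOn (fun s => (u - s) ^ (ρ - 1) * h s) (Ioo 0 u) := by
        refine IntegrableOn.congr_fun (hKfu.sub hKmin) (fun s hs => ?_) measurableSet_Ioo
        have h1 := hptw s hs
        simp only [Pi.sub_apply]
        linarith
      have hsplit : ∫ s in Ioo 0 u, (u - s) ^ (ρ - 1) * f s
          = (∫ s in Ioo 0 u, (u - s) ^ (ρ - 1) * min (f s) (g s))
            + ∫ s in Ioo 0 u, (u - s) ^ (ρ - 1) * h s := by
        rw [← integral_add hKmin hKh]
        exact setIntegral_congr_fun measurableSet_Ioo fun s hs => hptw s hs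
      have hmono : ∫ s in Ioo 0 u, (u - s) ^ (ρ - 1) * min (f s) (g s)
          ≤ ∫ s in Ioo 0 u, (u - s) ^ (ρ - 1) * g s := by
        refine setIntegral_mono_on hKmin hKg measurableSet_Ioo fun s hs => ?_
        exact mul_le_mul_of_nonneg_left (min_le_right _ _)
          (rpow_nonneg (by linarith [hs.2]) _)
      have h6 := hineq u hu0
      rw [hsplit, mul_add] at h6
      have h7 := factA u hu0
      have h8 : h u = f u - g u := by
        have heq : h u = max (f u - g u) 0 := by
          simp only [hhdef, if_pos (Set.mem_Ioc.mpr ⟨hu0, huT⟩ : u ∈ Ioc 0 T)]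
        rw [heq]
        exact max_eq_left (by linarith : 0 ≤ f u - g u)
      have h9 := hg2 u hu0.le
      have h10 : κ * (∫ s in Ioo 0 u, (u - s) ^ (ρ - 1) * min (f s) (g s))
          ≤ κ * ∫ s in Ioo 0 u, (u - s) ^ (ρ - 1) * g s :=
        mul_le_mul_of_nonneg_left hmono hκ.le
      rw [h8]
      linarith
  -- integrability of f near 0 and of h
  have hKfT := hKf T hT hcon
  have hfInt1 : IntegrableOn f (Ioo 0 (T/2)) := by
    set c := min ((T/2) ^ (ρ - 1)) (T ^ (ρ - 1)) with hcdef
    have hc : 0 < c := lt_min (rpow_pos_of_pos (by linarith) _) (rpow_pos_of_pos hT _)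
    have hbound : ∀ s ∈ Ioo (0:ℝ) (T/2), c ≤ (T - s) ^ (ρ - 1) := by
      intro s hs
      rcases le_total 0 (ρ - 1) with hr | hr
      · exact le_trans (min_le_left _ _) (rpow_le_rpow (by linarith) (by linarith [hs.2]) hr)
      · exact le_trans (min_le_right _ _)
          (rpow_le_rpow_of_nonpos (by linarith [hs.2]) (by linarith [hs.1]) hr)
    refine Integrable.mono'
      ((hKfT.mono_set (Ioo_subset_Ioo_right (by linarith))).const_mul c⁻¹)
      (hfm.mono_measure (Measure.restrict_mono (fun s hs => hs.1) le_rfl)) ?_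
    filter_upwards [self_mem_ae_restrict measurableSet_Ioo] with s hs
    rw [Real.norm_eq_abs, abs_of_nonneg (hf0 s hs.1)]
    have h1 := hbound s hs
    have h2 := hf0 s hs.1
    have h3 : c * f s ≤ (T - s) ^ (ρ - 1) * f s := mul_le_mul_of_nonneg_right h1 h2
    rw [inv_mul_eq_div, le_div_iff₀ hc]
    linarith
  have hfInt2 : IntegrableOn f (Icc (T/2) T) :=
    hloc.integrableOn_compact_subset (fun s hs => lt_of_lt_of_le (by linarith) hs.1)
      isCompact_Icc
  have hfInt : IntegrableOn f (Ioc 0 T) := by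
    refine (hfInt1.union hfInt2).mono_set fun s hs => ?_
    by_cases h1 : s < T/2
    · exact Or.inl ⟨hs.1, h1⟩
    · exact Or.inr ⟨not_lt.1 h1, hs.2⟩
  have hham : AEStronglyMeasurable h (volume.restrict (Ioc 0 T)) := by
    have h1 : ∀ᵐ s ∂(volume.restrict (Ioc 0 T)), max (f s - g s) 0 = h s := by
      filter_upwards [self_mem_ae_restrict measurableSet_Ioc] with s hs
      simp only [hhdef, if_pos hs]
    refine AEStronglyMeasurable.congr ?_ h1
    have h2 : AEStronglyMeasurable f (volume.restrict (Ioc 0 T)) :=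
      hfm.mono_measure (Measure.restrict_mono Ioc_subset_Ioi_self le_rfl)
    exact ((h2.aemeasurable.sub hgcont.measurable.aemeasurable).max
      aemeasurable_const).aestronglyMeasurable
  have hhInt : IntegrableOn h (Ioc 0 T) := by
    refine Integrable.mono' hfInt hham ?_
    filter_upwards [self_mem_ae_restrict measurableSet_Ioc] with s hs
    rw [Real.norm_eq_abs, abs_of_nonneg (hh0 s)]
    exact hhle s hs
  -- measurable representative
  have hf₀m : StronglyMeasurable (hfm.mk f) := hfm.stronglyMeasurable_mk
  set f₀ : ℝ → ℝ := hfm.mk f with hf₀def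
  have hff₀ : f =ᵐ[volume.restrict (Ioi 0)] f₀ := hfm.ae_eq_mk
  set h₀ : ℝ → ℝ := fun s => if s ∈ Ioc 0 T then max (f₀ s - g s) 0 else 0 with hh₀def
  have hh₀m : Measurable h₀ := by
    refine Measurable.ite measurableSet_Ioc ?_ measurable_const
    exact (hf₀m.measurable.sub hgcont.measurable).max measurable_const
  have hhh₀ : h =ᵐ[volume.restrict (Ioi 0)] h₀ := by
    filter_upwards [hff₀] with s hs
    simp only [hhdef, hh₀def, hs]
  have hh₀0 : ∀ s, 0 ≤ h₀ s := by
    intro s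
    simp only [hh₀def]
    split
    · exact le_max_right _ _
    · exact le_rfl
  have hh₀T : ∀ s, T < s → h₀ s = 0 := by
    intro s hs
    simp only [hh₀def]
    rw [if_neg (fun hmem => absurd hmem.2 (not_le.2 hs))]
  set H₀ : ℝ → ℝ≥0∞ := fun s => ENNReal.ofReal (h₀ s) with hH₀def
  have hH₀m : Measurable H₀ := hh₀m.ennreal_ofReal
  -- contraction constant
  set δ : ℝ := (ρ / (2 * κ)) ^ (1/ρ) with hδdef
  have hδ : 0 < δ := rpow_pos_of_pos (by positivity) _
  have hδρ : κ * (δ ^ ρ / ρ) = 1/2 := by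
    rw [hδdef, one_div, Real.rpow_inv_rpow (by positivity) hρ.ne']
    field_simp
  -- main induction: h vanishes a.e. below n * δ
  have hQ : ∀ n : ℕ, ∀ᵐ s ∂(volume.restrict (Ioi 0)), s ≤ (n:ℝ) * δ → h s = 0 := by
    intro n
    induction n with
    | zero =>
      filter_upwards [self_mem_ae_restrict measurableSet_Ioi] with s hs hs0
      push_cast at hs0
      rw [zero_mul] at hs0
      exact absurd (lt_of_lt_of_le hs hs0) (lt_irrefl _)
    | succ n IH =>
      set a : ℝ := (n:ℝ) * δ with hadef
      have ha : 0 ≤ a := by positivity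
      set b : ℝ := ((n:ℝ) + 1) * δ with hbdef
      have hab : a < b := by
        simp only [hadef, hbdef]
        nlinarith
      have hba : b = a + δ := by
        simp only [hadef, hbdef]
        ring
      set In : Set ℝ := Ioc a b ∩ Ioc 0 T with hIndef
      have hInmeas : MeasurableSet In := measurableSet_Ioc.inter measurableSet_Ioc
      set J : Set ℝ := Ioo a b with hJdef
      have IH' : ∀ᵐ s : ℝ ∂volume, s ∈ Ioi 0 → (s ≤ a → h s = 0) :=
        (ae_restrict_iff' measurableSet_Ioi).mp IH
      have hcong : ∀ u ∈ In, (∫ s in Ioo 0 u, (u - s) ^ (ρ - 1) * h s)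
          = ∫ s in Ioo a u, (u - s) ^ (ρ - 1) * h s := by
        intro u hu
        have h1 : ∫ s in Ioo 0 u, (u - s) ^ (ρ - 1) * h s
            = ∫ s in Ioo 0 u, (Ioi a).indicator (fun s => (u - s) ^ (ρ - 1) * h s) s := by
          refine setIntegral_congr_ae measurableSet_Ioo ?_
          filter_upwards [IH'] with s hsih hs
          by_cases hsa : a < s
          · rw [Set.indicator_of_mem (Set.mem_Ioi.mpr hsa)]
          · rw [Set.indicator_of_notMem (fun hmem => hsa (Set.mem_Ioi.mp hmem)),
              hsih (Set.mem_Ioi.mpr hs.1) (not_lt.1 hsa), mul_zero]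
        rw [h1, setIntegral_indicator measurableSet_Ioi,
          show Ioo 0 u ∩ Ioi a = Ioo a u by
            ext s
            simp only [Set.mem_inter_iff, Set.mem_Ioo, Set.mem_Ioi]
            constructor
            · rintro ⟨⟨h1', h2'⟩, h3'⟩
              exact ⟨h3', h2'⟩
            · rintro ⟨h1', h2'⟩
              exact ⟨⟨lt_of_le_of_lt ha h1', h2'⟩, h1'⟩]
      have hpt : ∀ u ∈ In, h u ≤ κ * ∫ s in Ioo a u, (u - s) ^ (ρ - 1) * h s := by
        intro u hu
        have h1 := factB u hu.2
        rwa [hcong u hu] at h1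
      -- pass to ENNReal
      have hpt3 : ∀ u ∈ In, ENNReal.ofReal (h u)
          ≤ ENNReal.ofReal κ * ∫⁻ s in Ioo a u, ENNReal.ofReal ((u - s) ^ (ρ - 1)) * H₀ s := by
        intro u hu
        have hsub : Ioo a u ⊆ Ioi (0:ℝ) := fun s hs => lt_of_le_of_lt ha hs.1
        calc ENNReal.ofReal (h u)
            ≤ ENNReal.ofReal (κ * ∫ s in Ioo a u, (u - s) ^ (ρ - 1) * h s) :=
              ENNReal.ofReal_le_ofReal (hpt u hu)
          _ = ENNReal.ofReal κ * ENNReal.ofReal (∫ s in Ioo a u, (u - s) ^ (ρ - 1) * h s) :=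
              ENNReal.ofReal_mul hκ.le
          _ ≤ ENNReal.ofReal κ * ∫⁻ s in Ioo a u, ENNReal.ofReal ((u - s) ^ (ρ - 1) * h s) :=
              mul_le_mul_right (FracGronwall.ofReal_integral_le _ _) _
          _ = ENNReal.ofReal κ * ∫⁻ s in Ioo a u, ENNReal.ofReal ((u - s) ^ (ρ - 1)) * H₀ s := by
              congr 1
              refine lintegral_congr_ae ?_
              filter_upwards [self_mem_ae_restrict measurableSet_Ioo,
                ae_restrict_of_ae_restrict_of_subset hsub hhh₀] with s hs hs2
              rw [ENNReal.ofReal_mul (rpow_nonneg (by linarith [hs.2]) _), hs2]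
      set Fk : ℝ → ℝ → ℝ≥0∞ := fun u s => ENNReal.ofReal ((u - s) ^ (ρ - 1)) * H₀ s with hFkdef
      have hAfin : (∫⁻ s in In, H₀ s) ≠ ⊤ := by
        have h1 : (∫⁻ s in In, H₀ s) ≤ ∫⁻ s in Ioc 0 T, H₀ s :=
          lintegral_mono_set (fun s hs => hs.2)
        have h2 : ∫⁻ s in Ioc 0 T, H₀ s = ∫⁻ s in Ioc 0 T, ENNReal.ofReal (h s) := by
          refine lintegral_congr_ae ?_
          filter_upwards [ae_restrict_of_ae_restrict_of_subset Ioc_subset_Ioi_self hhh₀]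
            with s hs
          rw [hH₀def, hs]
        have h3 : (∫⁻ s in Ioc 0 T, ENNReal.ofReal (h s)) < ⊤ := by
          refine lt_of_le_of_lt (lintegral_mono fun s => ?_) hhInt.2
          rw [← ofReal_norm, Real.norm_eq_abs]
          exact ENNReal.ofReal_le_ofReal (le_abs_self _)
        exact ne_top_of_le_ne_top (by rw [← h2] at h3; exact (lt_of_le_of_lt h1 h3).ne) le_rfl
      -- the key contraction estimate
      have hchain : (∫⁻ u in In, H₀ u) ≤ ENNReal.ofReal (1/2) * ∫⁻ u in In, H₀ u := by
        have hstep1 : (∫⁻ u in In, H₀ u) = ∫⁻ u in In, ENNReal.ofReal (h u) := by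
          refine lintegral_congr_ae ?_
          filter_upwards [ae_restrict_of_ae_restrict_of_subset (fun s hs => hs.2.1) hhh₀]
            with s hs
          rw [hH₀def, hs]
        have hstep2 : (∫⁻ u in In, ENNReal.ofReal (h u))
            ≤ ∫⁻ u in In, ENNReal.ofReal κ * ∫⁻ s in Ioo a u, Fk u s := by
          refine lintegral_mono_ae ?_
          filter_upwards [self_mem_ae_restrict hInmeas] with u hu
          exact hpt3 u hu
        have hstep3 : (∫⁻ u in In, ENNReal.ofReal κ * ∫⁻ s in Ioo a u, Fk u s)
            = ENNReal.ofReal κ * ∫⁻ u in In, ∫⁻ s in Ioo a u, Fk u s :=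
          lintegral_const_mul' _ _ ENNReal.ofReal_ne_top
        -- rewrite the inner integral over the fixed interval J with an indicator
        have hstep4 : (∫⁻ u in In, ∫⁻ s in Ioo a u, Fk u s)
            = ∫⁻ u in In, ∫⁻ s in J, (Iio u).indicator (Fk u) s := by
          refine setLIntegral_congr_fun hInmeas ?_
          intro u hu
          dsimp only
          rw [lintegral_indicator measurableSet_Iio, Measure.restrict_restrict measurableSet_Iio,
            show Iio u ∩ J = Ioo a u by
              ext s
              simp only [Set.mem_inter_iff, Set.mem_Ioo, Set.mem_Iio]
              constructor
              · rintro ⟨h1', h2', h3'⟩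
                exact ⟨h2', h1'⟩
              · rintro ⟨h1', h2'⟩
                exact ⟨h2', h1', lt_of_lt_of_le h2' hu.1.2⟩]
        have hGm : Measurable (Function.uncurry fun u s => (Iio u).indicator (Fk u) s) := by
          have heq : (Function.uncurry fun u s => (Iio u).indicator (Fk u) s)
              = fun p : ℝ × ℝ => {q : ℝ × ℝ | q.2 < q.1}.indicator
                  (fun q => ENNReal.ofReal ((q.1 - q.2) ^ (ρ - 1)) * H₀ q.2) p := by
            funext p
            simp only [Function.uncurry, Set.indicator_apply, Set.mem_Iio, Set.mem_setOf_eq,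
              hFkdef]
          rw [heq]
          refine Measurable.indicator ?_ (measurableSet_lt measurable_snd measurable_fst)
          exact (((measurable_fst.sub measurable_snd).pow measurable_const).ennreal_ofReal).mul
            (hH₀m.comp measurable_snd)
        have hswap : (∫⁻ u in In, ∫⁻ s in J, (Iio u).indicator (Fk u) s)
            = ∫⁻ s in J, ∫⁻ u in In, (Iio u).indicator (Fk u) s :=
          lintegral_lintegral_swap hGm.aemeasurable
        have hinner : ∀ s ∈ J, (∫⁻ u in In, (Iio u).indicator (Fk u) s)
            ≤ ENNReal.ofReal (δ ^ ρ / ρ) * H₀ s := by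
          intro s hs
          have hs0 : 0 < s := lt_of_le_of_lt ha hs.1
          calc ∫⁻ u in In, (Iio u).indicator (Fk u) s
              = ∫⁻ u in In, (Ioi s).indicator (fun u => Fk u s) u := by
                refine lintegral_congr fun u => ?_
                simp only [Set.indicator_apply, Set.mem_Iio, Set.mem_Ioi]
            _ = ∫⁻ u in Ioi s ∩ In, Fk u s := by
                rw [lintegral_indicator measurableSet_Ioi,
                  Measure.restrict_restrict measurableSet_Ioi]
            _ ≤ ∫⁻ u in Ioo s (s + δ), Fk u s := by
                refine lintegral_mono_set fun u hu => ?_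
                refine ⟨hu.1, ?_⟩
                have h1 : u ≤ b := hu.2.1.2
                have h2 : a < s := hs.1
                rw [hba] at h1
                linarith
            _ = (∫⁻ u in Ioo s (s + δ), ENNReal.ofReal ((u - s) ^ (ρ - 1))) * H₀ s :=
                lintegral_mul_const' _ _ ENNReal.ofReal_ne_top
            _ = ENNReal.ofReal (δ ^ ρ / ρ) * H₀ s := by
                congr 1
                rw [← ofReal_integral_eq_lintegral_ofReal
                  (FracGronwall.ker_integrableOn' (by linarith) (by linarith))
                  (by
                    filter_upwards [self_mem_ae_restrict measurableSet_Ioo] with u hu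
                    exact rpow_nonneg (by linarith [hu.1]) _)]
                rw [FracGronwall.ker_integral' (by linarith) (by linarith),
                  show s + δ - s = δ by ring, show ρ - 1 + 1 = ρ by ring]
        have hstep5 : (∫⁻ s in J, ∫⁻ u in In, (Iio u).indicator (Fk u) s)
            ≤ ∫⁻ s in J, ENNReal.ofReal (δ ^ ρ / ρ) * H₀ s := by
          refine lintegral_mono_ae ?_
          filter_upwards [self_mem_ae_restrict measurableSet_Ioo] with s hs
          exact hinner s hs
        have hstep6 : (∫⁻ s in J, ENNReal.ofReal (δ ^ ρ / ρ) * H₀ s)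
            = ENNReal.ofReal (δ ^ ρ / ρ) * ∫⁻ s in J, H₀ s :=
          lintegral_const_mul' _ _ ENNReal.ofReal_ne_top
        have hJIn : (∫⁻ s in J, H₀ s) ≤ ∫⁻ u in In, H₀ u := by
          have h1 : (∫⁻ s in J, H₀ s) = ∫⁻ s in J, (Iic T).indicator H₀ s := by
            refine lintegral_congr fun s => ?_
            by_cases hsT : s ≤ T
            · rw [Set.indicator_of_mem (Set.mem_Iic.mpr hsT)]
            · rw [Set.indicator_of_notMem (fun hmem => hsT (Set.mem_Iic.mp hmem)),
                hH₀def]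
              simp only
              rw [hh₀T s (not_le.1 hsT), ENNReal.ofReal_zero]
          rw [h1, lintegral_indicator measurableSet_Iic,
            Measure.restrict_restrict measurableSet_Iic]
          refine lintegral_mono_set fun s hs => ?_
          exact ⟨⟨hs.2.1, hs.2.2.le⟩, ⟨lt_of_le_of_lt ha hs.2.1, hs.1⟩⟩
        calc (∫⁻ u in In, H₀ u)
            ≤ ENNReal.ofReal κ * ∫⁻ u in In, ∫⁻ s in Ioo a u, Fk u s := by
              rw [hstep1, ← hstep3]
              exact hstep2
          _ = ENNReal.ofReal κ * ∫⁻ s in J, ∫⁻ u in In, (Iio u).indicator (Fk u) s := by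
              rw [hstep4, hswap]
          _ ≤ ENNReal.ofReal κ * (ENNReal.ofReal (δ ^ ρ / ρ) * ∫⁻ s in J, H₀ s) := by
              rw [← hstep6]
              exact mul_le_mul_right hstep5 _
          _ ≤ ENNReal.ofReal κ * (ENNReal.ofReal (δ ^ ρ / ρ) * ∫⁻ u in In, H₀ u) :=
              mul_le_mul_right (mul_le_mul_right hJIn _) _
          _ = ENNReal.ofReal (1/2) * ∫⁻ u in In, H₀ u := by
              rw [← mul_assoc, ← ENNReal.ofReal_mul hκ.le, hδρ]
      have hA0 : (∫⁻ u in In, H₀ u) = 0 := by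
        by_contra hA0
        have hlt : ENNReal.ofReal (1/2) * (∫⁻ u in In, H₀ u) < 1 * ∫⁻ u in In, H₀ u := by
          refine ENNReal.mul_lt_mul_left hA0 hAfin ?_
          exact ENNReal.ofReal_lt_one.2 (by norm_num)
        rw [one_mul] at hlt
        exact absurd hchain (not_le.2 hlt)
      have haeIn : ∀ᵐ s : ℝ ∂volume, s ∈ In → h₀ s = 0 := by
        rw [← ae_restrict_iff' hInmeas]
        have h1 := (lintegral_eq_zero_iff hH₀m).mp hA0
        filter_upwards [h1] with s hs
        have h2 : h₀ s ≤ 0 := ENNReal.ofReal_eq_zero.mp hs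
        linarith [hh₀0 s]
      filter_upwards [IH, haeIn.filter_mono (ae_mono Measure.restrict_le_self),
        (hhh₀ : _), self_mem_ae_restrict measurableSet_Ioi] with s hIHs hstep hsh₀ hs hsle
      push_cast at hsle
      by_cases hsa : s ≤ a
      · exact hIHs hsa
      · push_neg at hsa
        by_cases hsT : s ≤ T
        · rw [hsh₀]
          exact hstep ⟨⟨hsa, by rw [hbdef]; exact hsle⟩, ⟨hs, hsT⟩⟩
        · simp only [hhdef]
          rw [if_neg (fun hmem => absurd hmem.2 (not_le.2 (not_le.1 hsT)))]
  -- conclusion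
  obtain ⟨n, hn⟩ := exists_nat_ge (T / δ)
  have hδ : (0:ℝ) < (ρ / (2 * κ)) ^ (1/ρ) := rpow_pos_of_pos (by positivity) _
  have hTn : T ≤ (n:ℝ) * ((ρ / (2 * κ)) ^ (1/ρ)) := by
    rw [div_le_iff₀ hδ] at hn
    linarith
  have hzero : ∀ᵐ s ∂(volume.restrict (Ioo 0 T)), h s = 0 := by
    have h1 := ae_restrict_of_ae_restrict_of_subset (Ioo_subset_Ioi_self : Ioo (0:ℝ) T ⊆ Ioi 0) (hQ n)
    filter_upwards [h1, self_mem_ae_restrict measurableSet_Ioo] with s h2 h3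
    exact h2 (le_trans h3.2.le hTn)
  have hint0 : ∫ s in Ioo 0 T, (T - s) ^ (ρ - 1) * h s = 0 := by
    have h1 : ∫ s in Ioo 0 T, (T - s) ^ (ρ - 1) * h s = ∫ _ in Ioo 0 T, (0:ℝ) := by
      refine integral_congr_ae ?_
      filter_upwards [hzero] with s hs
      rw [hs, mul_zero]
    rw [h1, integral_zero]
  have hfinal := factB T ⟨hT, le_rfl⟩
  rw [hint0, mul_zero] at hfinal
  linarith
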